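/- arXiv:2604.01041 — 4 statements merged into one kernel-verified Lean document; each statement's English description precedes it below -/
import Mathlib

section
/- If a configuration C ∈ Config_{n,m} contains a cycle, then every cell of C inside the rectangle [n+1]×[m+2] belongs to this cycle. -/
/-!
Cellular automata on bounded configurations (Durand / Kapytka setup).

A cell state has components (coord, flag, a, pd, pc, label), each possibly the
undefined value `□` (modelled by `Option`).  Configurations are maps
`ℤ × ℤ → CellState` that are quiescent exactly outside the rectangle
`[n+1] × [m+2]`.  A CNF formula `φ` is given by its clause–literal incidence:
`φ i j = some true` iff `x_j ∈ C_i`, `some false` iff `¬x_j ∈ C_i`,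
`none` iff neither occurs.
-/

namespace CA

structure CellState where
  coord : Option ℤ × Option ℤ
  flag  : Option ℤ
  aval  : Option Bool
  pd    : Option Bool
  pc    : Option Bool
  label : Option Bool
  deriving DecidableEq

/-- The quiescent state `q`: all components are `□`. -/
def qState : CellState := ⟨(none, none), none, none, none, none, none⟩

abbrev Cfg := ℤ × ℤ → CellState

/-- Clause–literal incidence of a CNF formula. -/
abbrev CNF := ℤ → ℤ → Option Bool

/-- The position `p` lies inside the rectangle `[n+1] × [m+2]`. -/
def inside (n m : ℕ) (p : ℤ × ℤ) : Prop :=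
  0 ≤ p.1 ∧ p.1 ≤ (n : ℤ) ∧ 0 ≤ p.2 ∧ p.2 ≤ (m : ℤ) + 1

def rightN (p : ℤ × ℤ) : ℤ × ℤ := (p.1, p.2 + 1)
def leftN  (p : ℤ × ℤ) : ℤ × ℤ := (p.1, p.2 - 1)
def belowN (p : ℤ × ℤ) : ℤ × ℤ := (p.1 + 1, p.2)
def aboveN (p : ℤ × ℤ) : ℤ × ℤ := (p.1 - 1, p.2)

/-- `q` is a von Neumann neighbour of `p`. -/
def vnNbr (p q : ℤ × ℤ) : Prop :=
  q = rightN p ∨ q = leftN p ∨ q = belowN p ∨ q = aboveN p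

/-- The state set `S_{n,m}`: the seven classes (S1)–(S7). -/
def ValidState (n m : ℕ) (s : CellState) : Prop :=
  (∃ l : Bool, s = ⟨(some 0, some 0), none, none, none, none, some l⟩) ∨
  (∃ (i : ℤ) (l : Bool), 1 ≤ i ∧ i ≤ (n : ℤ) ∧
      s = ⟨(some i, some 0), none, none, none, none, some l⟩) ∨
  (∃ (j : ℤ) (a l : Bool), 1 ≤ j ∧ j ≤ (m : ℤ) ∧
      s = ⟨(some 0, some j), none, some a, none, none, some l⟩) ∨
  (∃ l : Bool, s = ⟨(some 0, some ((m : ℤ) + 1)), none, none, none, none, some l⟩) ∨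
  (∃ (i : ℤ) (pc l : Bool), 1 ≤ i ∧ i ≤ (n : ℤ) ∧
      s = ⟨(some i, some ((m : ℤ) + 1)), none, none, none, some pc, some l⟩) ∨
  (∃ (i j fl : ℤ) (a pd l : Bool), 1 ≤ i ∧ i ≤ (n : ℤ) ∧ 1 ≤ j ∧ j ≤ (m : ℤ) ∧
      (fl = -1 ∨ fl = 0 ∨ fl = 1) ∧
      s = ⟨(some i, some j), some fl, some a, some pd, none, some l⟩) ∨
  s = qState

/-- `C ∈ Config_{n,m}`. -/
def IsConfig (n m : ℕ) (C : Cfg) : Prop :=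
  (∀ p, ValidState n m (C p)) ∧
  (∀ p, inside n m p → C p ≠ qState) ∧
  (∀ p, ¬ inside n m p → C p = qState)

/-- The literal of clause `C_i` on variable `x_j` is satisfied by `a`. -/
def litSat (φ : CNF) (a : ℤ → Bool) (i j : ℤ) : Prop :=
  (φ i j = some true ∧ a j = true) ∨ (φ i j = some false ∧ a j = false)

/-- Clause `C_i` is satisfied by the assignment `a`. -/
def clauseSat (φ : CNF) (a : ℤ → Bool) (m : ℕ) (i : ℤ) : Prop :=
  ∃ j : ℤ, 1 ≤ j ∧ j ≤ (m : ℤ) ∧ litSat φ a i j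

/-- The CNF formula `φ` (with `n` clauses, `m` variables) is satisfiable. -/
def Satisfiable (φ : CNF) (n m : ℕ) : Prop :=
  ∃ a : ℤ → Bool, ∀ i : ℤ, 1 ≤ i → i ≤ (n : ℤ) → clauseSat φ a m i

/-- The cell at position `q` behaves correctly for theoretical index `idx`:
if `idx` is inside the rectangle its written coordinates are `idx`,
otherwise the cell is quiescent. -/
def nbrCoordOK (n m : ℕ) (C : Cfg) (q idx : ℤ × ℤ) : Prop :=
  (inside n m idx → (C q).coord = (some idx.1, some idx.2)) ∧
  (¬ inside n m idx → C q = qState)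

/-- (A) Index consistency. -/
def ruleA (n m : ℕ) (C : Cfg) (p : ℤ × ℤ) : Prop :=
  ∀ i j : ℤ, 0 ≤ i → i ≤ (n : ℤ) → 0 ≤ j → j ≤ (m : ℤ) + 1 →
    ((C p).coord = (some i, some j) ↔
      (nbrCoordOK n m C (rightN p) (i, j + 1) ∧
       nbrCoordOK n m C (leftN p) (i, j - 1) ∧
       nbrCoordOK n m C (belowN p) (i + 1, j) ∧
       nbrCoordOK n m C (aboveN p) (i - 1, j)))

/-- (B) Formula consistency. -/
def ruleB (φ : CNF) (n m : ℕ) (C : Cfg) (p : ℤ × ℤ) : Prop :=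
  ∀ i j : ℤ, (C p).coord = (some i, some j) →
    1 ≤ i → i ≤ (n : ℤ) → 1 ≤ j → j ≤ (m : ℤ) →
      (((C p).flag = some 1 ↔ φ i j = some true) ∧
       ((C p).flag = some (-1) ↔ φ i j = some false) ∧
       ((C p).flag = some 0 ↔ φ i j = none))

/-- (C1) the `a`-value is constant along columns `1 ≤ j ≤ m`. -/
def ruleC1 (n m : ℕ) (C : Cfg) (p : ℤ × ℤ) : Prop :=
  ∀ i j : ℤ, (C p).coord = (some i, some j) → 1 ≤ j → j ≤ (m : ℤ) →
    ((inside n m (aboveN p) → (C (aboveN p)).aval = (C p).aval) ∧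
     (inside n m (belowN p) → (C (belowN p)).aval = (C p).aval))

/-- (C2) partial conjunction recurrence for rows `r ≥ 2`. -/
def ruleC2 (n m : ℕ) (C : Cfg) (p : ℤ × ℤ) : Prop :=
  ∀ r : ℤ, (C p).coord = (some r, some ((m : ℤ) + 1)) → 2 ≤ r →
    ((C p).pc = some true ↔
      ((C (aboveN p)).pc = some true ∧ (C (leftN p)).pd = some true))

/-- (C3) partial conjunction base case. -/
def ruleC3 (n m : ℕ) (C : Cfg) (p : ℤ × ℤ) : Prop :=
  (C p).coord = (some 1, some ((m : ℤ) + 1)) →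
    ((C p).pc = some true ↔ (C (leftN p)).pd = some true)

/-- The literal written in the cell is satisfied:
`flag(s) = 1 ∧ a(s) = 1` or `flag(s) = −1 ∧ a(s) = 0`. -/
def litHolds (C : Cfg) (p : ℤ × ℤ) : Prop :=
  ((C p).flag = some 1 ∧ (C p).aval = some true) ∨
  ((C p).flag = some (-1) ∧ (C p).aval = some false)

/-- (D1) partial disjunction recurrence for columns `2 ≤ j ≤ m`. -/
def ruleD1 (n m : ℕ) (C : Cfg) (p : ℤ × ℤ) : Prop :=
  ∀ i j : ℤ, (C p).coord = (some i, some j) →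
    1 ≤ i → i ≤ (n : ℤ) → 2 ≤ j → j ≤ (m : ℤ) →
      ((C p).pd = some true ↔ ((C (leftN p)).pd = some true ∨ litHolds C p))

/-- (D2) partial disjunction base case. -/
def ruleD2 (n m : ℕ) (C : Cfg) (p : ℤ × ℤ) : Prop :=
  ∀ i : ℤ, (C p).coord = (some i, some 1) → 1 ≤ i → i ≤ (n : ℤ) →
    ((C p).pd = some true ↔ litHolds C p)

/-- (E) Technical conditions (E1)–(E4). -/
def ruleE (n m : ℕ) (C : Cfg) (p : ℤ × ℤ) : Prop :=
  ∀ i j : ℤ, (C p).coord = (some i, some j) →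
    (((j = 0 ∨ (i = 0 ∧ j = 0) ∨ (i = 0 ∧ j = (m : ℤ) + 1)) →
        (C p).flag = none ∧ (C p).aval = none ∧ (C p).pd = none ∧ (C p).pc = none) ∧
     ((i = 0 ∧ 1 ≤ j ∧ j ≤ (m : ℤ)) →
        (C p).flag = none ∧ (C p).pd = none ∧ (C p).pc = none) ∧
     ((j = (m : ℤ) + 1 ∧ 1 ≤ i) →
        (C p).flag = none ∧ (C p).aval = none ∧ (C p).pd = none) ∧
     ((1 ≤ i ∧ i ≤ (n : ℤ) ∧ 1 ≤ j ∧ j ≤ (m : ℤ)) → (C p).pc = none))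

/-- The cell of `C` at `p` is locally correct: rules (A)–(E). -/
def LocallyCorrect (φ : CNF) (n m : ℕ) (C : Cfg) (p : ℤ × ℤ) : Prop :=
  ruleA n m C p ∧ ruleB φ n m C p ∧ ruleC1 n m C p ∧ ruleC2 n m C p ∧
  ruleC3 n m C p ∧ ruleD1 n m C p ∧ ruleD2 n m C p ∧ ruleE n m C p

/-- The (non-quiescent) cell of `C` at `p` is blue: it is locally correct and,
if it is an output cell, its `pc` component is `1`.  A cell is red iff it is
not blue. -/
def Blue (φ : CNF) (n m : ℕ) (C : Cfg) (p : ℤ × ℤ) : Prop :=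
  C p ≠ qState ∧ LocallyCorrect φ n m C p ∧
  ((C p).coord = (some (n : ℤ), some ((m : ℤ) + 1)) → (C p).pc = some true)

open scoped Classical in
/-- The snake-like successor map on indices of the rectangle `[n+1] × [m+2]`. -/
noncomputable def suc (n m : ℕ) (p : ℤ × ℤ) : ℤ × ℤ :=
  if p = (0, 0) ∨ (Even p.1 ∧ 1 ≤ p.2 ∧ p.2 ≤ (m : ℤ)) then (p.1, p.2 + 1)
  else if p = ((n : ℤ), 1) ∨ (Odd p.1 ∧ 2 ≤ p.2 ∧ p.2 ≤ (m : ℤ) + 1) then (p.1, p.2 - 1)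
  else if (Odd p.1 ∧ p.2 = 1 ∧ p.1 ≠ (n : ℤ)) ∨ (Even p.1 ∧ p.2 = (m : ℤ) + 1) then
    (p.1 + 1, p.2)
  else (p.1 - 1, p.2)

/-- `q` is the successor cell of `p` in `C`: a von Neumann neighbour whose
written coordinates are `suc` of the written coordinates of `p`. -/
def IsSucc (n m : ℕ) (C : Cfg) (p q : ℤ × ℤ) : Prop :=
  vnNbr p q ∧ ∃ i j : ℤ, (C p).coord = (some i, some j) ∧
    (C q).coord = (some (suc n m (i, j)).1, some (suc n m (i, j)).2)

/-- The position of the successor cell of `p` (the geometric neighbour of `p`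
in the direction from the written coordinates of `p` to their `suc`). -/
noncomputable def succPos (n m : ℕ) (C : Cfg) (p : ℤ × ℤ) : ℤ × ℤ :=
  match (C p).coord with
  | (some i, some j) => (p.1 + ((suc n m (i, j)).1 - i), p.2 + ((suc n m (i, j)).2 - j))
  | _ => p

open scoped Classical in
/-- The global map of the cellular automaton `A_φ`: a blue cell replaces its
label by `label(s₁) XOR label(s_k)` where `s_k` is the state of its successor
cell; a red cell is unchanged. -/
noncomputable def step (φ : CNF) (n m : ℕ) (C : Cfg) : Cfg := fun p =>
  if Blue φ n m C p then
    { C p with label := Option.map₂ Bool.xor ((C p).label) ((C (succPos n m C p)).label) }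
  else C p

/-- `C ∼ C'`: the configurations agree on all state components except
possibly the labels. -/
def Similar (C C' : Cfg) : Prop :=
  ∀ p, (C p).coord = (C' p).coord ∧ (C p).flag = (C' p).flag ∧
    (C p).aval = (C' p).aval ∧ (C p).pd = (C' p).pd ∧ (C p).pc = (C' p).pc

/-- Encoding of clause–literal occurrence as flag value in `{−1, 0, 1}`. -/
def flagInt (o : Option Bool) : ℤ :=
  match o with
  | some true => 1
  | some false => -1
  | none => 0

/-- Truth value under `a` of the disjunction of the literals of `C_i`
among the variables `x₁, …, x_j`. -/
noncomputable def pdVal (φ : CNF) (a : ℤ → Bool) (i j : ℤ) : Bool :=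
  @decide (∃ u : ℤ, 1 ≤ u ∧ u ≤ j ∧ litSat φ a i u) (Classical.propDecidable _)

/-- Truth value under `a` of the partial conjunction `C₁ ∧ … ∧ C_i`. -/
noncomputable def pcVal (φ : CNF) (a : ℤ → Bool) (m : ℕ) (i : ℤ) : Bool :=
  @decide (∀ v : ℤ, 1 ≤ v → v ≤ i → clauseSat φ a m v) (Classical.propDecidable _)

open scoped Classical in
/-- The computation table `Table_φ(a)`, with all labels `0`. -/
noncomputable def Table (φ : CNF) (n m : ℕ) (a : ℤ → Bool) : Cfg := fun p =>
  if inside n m p then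
    { coord := (some p.1, some p.2)
      flag := if 1 ≤ p.1 ∧ p.1 ≤ (n : ℤ) ∧ 1 ≤ p.2 ∧ p.2 ≤ (m : ℤ) then
          some (flagInt (φ p.1 p.2)) else none
      aval := if 1 ≤ p.2 ∧ p.2 ≤ (m : ℤ) then some (a p.2) else none
      pd := if 1 ≤ p.1 ∧ p.1 ≤ (n : ℤ) ∧ 1 ≤ p.2 ∧ p.2 ≤ (m : ℤ) then
          some (pdVal φ a p.1 p.2) else none
      pc := if 1 ≤ p.1 ∧ p.1 ≤ (n : ℤ) ∧ p.2 = (m : ℤ) + 1 then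
          some (pcVal φ a m p.1) else none
      label := some false }
  else qState

end CA

namespace CA

/-- Snake rank of a cell of the rectangle. -/
def rho (n m : ℕ) (p : ℤ × ℤ) : ℤ :=
  if p.1 = 0 then p.2
  else if p.2 = 0 then ((m : ℤ) + 2) + (n : ℤ) * ((m : ℤ) + 1) + ((n : ℤ) - p.1)
  else ((m : ℤ) + 2) + (p.1 - 1) * ((m : ℤ) + 1) +
    (if p.1 % 2 = 1 then ((m : ℤ) + 1) - p.2 else p.2 - 1)

lemma rho_row0 (n m : ℕ) (j : ℤ) : rho n m (0, j) = j := by simp [rho]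

lemma rho_col0 (n m : ℕ) {i : ℤ} (hi : i ≠ 0) :
    rho n m (i, 0) = ((m : ℤ) + 2) + (n : ℤ) * ((m : ℤ) + 1) + ((n : ℤ) - i) := by
  simp [rho, hi]

lemma rho_inner (n m : ℕ) {i j : ℤ} (hi : i ≠ 0) (hj : j ≠ 0) :
    rho n m (i, j) = ((m : ℤ) + 2) + (i - 1) * ((m : ℤ) + 1) +
      (if i % 2 = 1 then ((m : ℤ) + 1) - j else j - 1) := by
  simp [rho, hi, hj]

lemma rho_bound (n m : ℕ) (hn : 1 ≤ n) (hm : 1 ≤ m) (p : ℤ × ℤ) (hp : inside n m p) :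
    0 ≤ rho n m p ∧ rho n m p < ((n : ℤ) + 1) * ((m : ℤ) + 2) := by
  obtain ⟨i, j⟩ := p
  obtain ⟨h1, h2, h3, h4⟩ := hp
  have hn1 : (1 : ℤ) ≤ n := by exact_mod_cast hn
  have hm1 : (1 : ℤ) ≤ m := by exact_mod_cast hm
  have key : ((n : ℤ) + 1) * ((m : ℤ) + 2)
      = ((m : ℤ) + 2) + (n : ℤ) * ((m : ℤ) + 1) + n := by ring
  have key3 : (n : ℤ) * ((m : ℤ) + 1) = ((n : ℤ) - 1) * ((m : ℤ) + 1) + (m + 1) := by ring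
  have hB : 0 ≤ ((n : ℤ) - 1) * ((m : ℤ) + 1) := by
    apply mul_nonneg <;> omega
  rcases eq_or_ne i 0 with hi | hi
  · subst hi; rw [rho_row0]; constructor <;> nlinarith
  · have hi1 : 1 ≤ i := by omega
    have kA : (i - 1) * ((m : ℤ) + 1) ≤ ((n : ℤ) - 1) * ((m : ℤ) + 1) := by
      apply mul_le_mul_of_nonneg_right <;> omega
    have kA0 : 0 ≤ (i - 1) * ((m : ℤ) + 1) := by apply mul_nonneg <;> omega
    rcases eq_or_ne j 0 with hj | hj
    · subst hj; rw [rho_col0 n m hi]; constructor <;> nlinarith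
    · have hj1 : 1 ≤ j := by omega
      rw [rho_inner n m hi hj]
      split_ifs <;> constructor <;> nlinarith

lemma rho_inj (n m : ℕ) (hn : 1 ≤ n) (hm : 1 ≤ m) {p q : ℤ × ℤ}
    (hp : inside n m p) (hq : inside n m q) (h : rho n m p = rho n m q) : p = q := by
  obtain ⟨i, j⟩ := p
  obtain ⟨i', j'⟩ := q
  obtain ⟨h1, h2, h3, h4⟩ := hp
  obtain ⟨h1', h2', h3', h4'⟩ := hq
  have hn1 : (1 : ℤ) ≤ n := by exact_mod_cast hn
  have hm1 : (1 : ℤ) ≤ m := by exact_mod_cast hm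
  have key3 : (n : ℤ) * ((m : ℤ) + 1) = ((n : ℤ) - 1) * ((m : ℤ) + 1) + (m + 1) := by ring
  have hB : 0 ≤ ((n : ℤ) - 1) * ((m : ℤ) + 1) := by apply mul_nonneg <;> omega
  have hnn : 0 ≤ (n : ℤ) * ((m : ℤ) + 1) := by positivity
  -- helper facts for inner cells
  have inner : ∀ a b : ℤ, a ≠ 0 → b ≠ 0 → 0 ≤ a → a ≤ n → 0 ≤ b → b ≤ (m : ℤ) + 1 →
      ∃ r : ℤ, rho n m (a, b) = ((m : ℤ) + 2) + (a - 1) * ((m : ℤ) + 1) + r ∧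
        0 ≤ r ∧ r ≤ m ∧ ((a % 2 = 1 ∧ r = (m : ℤ) + 1 - b) ∨ (a % 2 = 0 ∧ r = b - 1)) := by
    intro a b ha hb ha0 han hb0 hbm
    rw [rho_inner n m ha hb]
    split_ifs with hpar
    · exact ⟨(m : ℤ) + 1 - b, rfl, by omega, by omega, Or.inl ⟨hpar, rfl⟩⟩
    · exact ⟨b - 1, rfl, by omega, by omega, Or.inr ⟨by omega, rfl⟩⟩
  rcases eq_or_ne i 0 with hi | hi <;> rcases eq_or_ne i' 0 with hi' | hi'
  · subst hi; subst hi'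
    rw [rho_row0, rho_row0] at h; rw [h]
  · -- row0 vs (col0 or inner)
    exfalso
    subst hi; rw [rho_row0] at h
    rcases eq_or_ne j' 0 with hj' | hj'
    · subst hj'; rw [rho_col0 n m hi'] at h; nlinarith
    · obtain ⟨r, hr, hr0, hrm, -⟩ := inner i' j' hi' hj' h1' h2' h3' h4'
      rw [hr] at h
      have : 0 ≤ (i' - 1) * ((m : ℤ) + 1) := by apply mul_nonneg <;> omega
      nlinarith
  · exfalso
    subst hi'; rw [rho_row0] at h
    rcases eq_or_ne j 0 with hj | hj
    · subst hj; rw [rho_col0 n m hi] at h; nlinarith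
    · obtain ⟨r, hr, hr0, hrm, -⟩ := inner i j hi hj h1 h2 h3 h4
      rw [hr] at h
      have : 0 ≤ (i - 1) * ((m : ℤ) + 1) := by apply mul_nonneg <;> omega
      nlinarith
  · rcases eq_or_ne j 0 with hj | hj <;> rcases eq_or_ne j' 0 with hj' | hj'
    · subst hj; subst hj'
      rw [rho_col0 n m hi, rho_col0 n m hi'] at h
      have : i = i' := by omega
      rw [this]
    · exfalso
      subst hj; rw [rho_col0 n m hi] at h
      obtain ⟨r, hr, hr0, hrm, -⟩ := inner i' j' hi' hj' h1' h2' h3' h4'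
      rw [hr] at h
      have hA : (i' - 1) * ((m : ℤ) + 1) ≤ ((n : ℤ) - 1) * ((m : ℤ) + 1) := by
        apply mul_le_mul_of_nonneg_right <;> omega
      nlinarith
    · exfalso
      subst hj'; rw [rho_col0 n m hi'] at h
      obtain ⟨r, hr, hr0, hrm, -⟩ := inner i j hi hj h1 h2 h3 h4
      rw [hr] at h
      have hA : (i - 1) * ((m : ℤ) + 1) ≤ ((n : ℤ) - 1) * ((m : ℤ) + 1) := by
        apply mul_le_mul_of_nonneg_right <;> omega
      nlinarith
    · -- inner vs inner
      obtain ⟨r, hr, hr0, hrm, hud⟩ := inner i j hi hj h1 h2 h3 h4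
      obtain ⟨r', hr', hr0', hrm', hud'⟩ := inner i' j' hi' hj' h1' h2' h3' h4'
      rw [hr, hr'] at h
      have heq : (i - i') * ((m : ℤ) + 1) = r' - r := by linear_combination h
      have hneg : (i' - i) * ((m : ℤ) + 1) = r - r' := by linear_combination -heq
      have hii : i = i' := by
        rcases lt_trichotomy i i' with hlt | he | hlt
        · exfalso
          have : (1 : ℤ) * ((m : ℤ) + 1) ≤ (i' - i) * ((m : ℤ) + 1) := by
            apply mul_le_mul_of_nonneg_right <;> omega
          linarith
        · exact he
        · exfalso
          have : (1 : ℤ) * ((m : ℤ) + 1) ≤ (i - i') * ((m : ℤ) + 1) := by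
            apply mul_le_mul_of_nonneg_right <;> omega
          linarith
      subst hii
      have hrr : r = r' := by linarith
      have : j = j' := by
        rcases hud with ⟨hp1, hp2⟩ | ⟨hp1, hp2⟩ <;> rcases hud' with ⟨hq1, hq2⟩ | ⟨hq1, hq2⟩ <;>
          omega
      rw [this]
end CA

namespace CA

lemma finish_mod {a b N : ℤ} (h : b = a + 1) (h0 : 0 ≤ b) (h1 : b < N) :
    b = (a + 1) % N := by rw [← h]; exact (Int.emod_eq_of_lt h0 h1).symm

lemma suc_step (n m : ℕ) (hn : 1 ≤ n) (hnodd : Odd n) (hm : 1 ≤ m) (p : ℤ × ℤ)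
    (hp : inside n m p) :
    inside n m (suc n m p) ∧
      rho n m (suc n m p) = (rho n m p + 1) % (((n : ℤ) + 1) * ((m : ℤ) + 2)) := by
  obtain ⟨i, j⟩ := p
  obtain ⟨h1, h2, h3, h4⟩ := hp
  simp only at h1 h2 h3 h4
  have hn1 : (1 : ℤ) ≤ n := by exact_mod_cast hn
  have hm1 : (1 : ℤ) ≤ m := by exact_mod_cast hm
  have hodd : (n : ℤ) % 2 = 1 := by
    obtain ⟨t, ht⟩ := hnodd; subst ht; push_cast; omega
  rcases Int.emod_two_eq i with ipar | ipar
  · -- i even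
    have hEi : Even i := Int.even_iff.mpr ipar
    have hine : i ≠ (n : ℤ) := by omega
    rcases eq_or_ne j ((m : ℤ) + 1) with hjm | hjm
    · -- j = m+1 : go down
      subst hjm
      have hsuc : suc n m (i, (m : ℤ) + 1) = (i + 1, (m : ℤ) + 1) := by
        rw [suc, if_neg, if_neg, if_pos (Or.inr ⟨hEi, rfl⟩)]
        · intro hc; simp only [Prod.mk.injEq, Int.even_iff, Int.odd_iff] at hc; omega
        · intro hc; simp only [Prod.mk.injEq, Int.even_iff, Int.odd_iff] at hc; omega
      rw [hsuc]
      have hins : inside n m (i + 1, (m : ℤ) + 1) := ⟨by omega, by omega, by omega, le_refl _⟩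
      have hb := rho_bound n m hn hm _ hins
      refine ⟨hins, finish_mod ?_ hb.1 hb.2⟩
      rw [rho_inner n m (show i + 1 ≠ 0 by omega) (show (m : ℤ) + 1 ≠ 0 by omega),
        if_pos (show (i + 1) % 2 = 1 by omega)]
      rcases eq_or_ne i 0 with hi0 | hi0
      · subst hi0; rw [rho_row0]; ring
      · rw [rho_inner n m hi0 (show (m : ℤ) + 1 ≠ 0 by omega),
          if_neg (show ¬ i % 2 = 1 by omega)]
        ring
    · rcases eq_or_ne j 0 with hj0 | hj0
      · subst hj0
        rcases eq_or_ne i 0 with hi0 | hi0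
        · -- (0,0) → (0,1)
          subst hi0
          have hsuc : suc n m ((0 : ℤ), (0 : ℤ)) = (0, 1) := by
            rw [suc, if_pos (Or.inl rfl)]; norm_num
          rw [hsuc]
          have hins : inside n m ((0 : ℤ), 1) := ⟨le_refl _, by omega, by omega, by omega⟩
          have hb := rho_bound n m hn hm _ hins
          refine ⟨hins, finish_mod ?_ hb.1 hb.2⟩
          rw [rho_row0, rho_row0]; omega
        · -- (i,0), i even ≥ 2 → (i-1,0)
          have hsuc : suc n m (i, (0 : ℤ)) = (i - 1, 0) := by
            rw [suc, if_neg, if_neg, if_neg]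
            · intro hc; simp only [Prod.mk.injEq, Int.even_iff, Int.odd_iff] at hc; omega
            · intro hc; simp only [Prod.mk.injEq, Int.even_iff, Int.odd_iff] at hc; omega
            · intro hc; simp only [Prod.mk.injEq, Int.even_iff, Int.odd_iff] at hc; omega
          rw [hsuc]
          have hins : inside n m (i - 1, (0 : ℤ)) := ⟨by omega, by omega, le_refl _, by omega⟩
          have hb := rho_bound n m hn hm _ hins
          refine ⟨hins, finish_mod ?_ hb.1 hb.2⟩
          rw [rho_col0 n m (show i - 1 ≠ 0 by omega), rho_col0 n m (show i ≠ 0 by omega)]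
          ring
      · -- i even, 1 ≤ j ≤ m : go right
        have hsuc : suc n m (i, j) = (i, j + 1) := by
          rw [suc, if_pos (Or.inr ⟨hEi, by omega, by omega⟩)]
        rw [hsuc]
        have hins : inside n m (i, j + 1) := ⟨h1, h2, by omega, by omega⟩
        have hb := rho_bound n m hn hm _ hins
        refine ⟨hins, finish_mod ?_ hb.1 hb.2⟩
        rcases eq_or_ne i 0 with hi0 | hi0
        · subst hi0; rw [rho_row0, rho_row0]
        · rw [rho_inner n m hi0 (show j + 1 ≠ 0 by omega), rho_inner n m hi0 hj0,
            if_neg (show ¬ i % 2 = 1 by omega), if_neg (show ¬ i % 2 = 1 by omega)]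
          ring
  · -- i odd, so 1 ≤ i
    have hOi : Odd i := Int.odd_iff.mpr ipar
    have hi1 : 1 ≤ i := by omega
    rcases eq_or_ne j 0 with hj0 | hj0
    · -- (i,0) → (i-1,0)
      subst hj0
      have hsuc : suc n m (i, (0 : ℤ)) = (i - 1, 0) := by
        rw [suc, if_neg, if_neg, if_neg]
        · intro hc; simp only [Prod.mk.injEq, Int.even_iff, Int.odd_iff] at hc; omega
        · intro hc; simp only [Prod.mk.injEq, Int.even_iff, Int.odd_iff] at hc; omega
        · intro hc; simp only [Prod.mk.injEq, Int.even_iff, Int.odd_iff] at hc; omega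
      rw [hsuc]
      have hins : inside n m (i - 1, (0 : ℤ)) := ⟨by omega, by omega, le_refl _, by omega⟩
      have hb := rho_bound n m hn hm _ hins
      rcases eq_or_ne i 1 with hi2 | hi2
      · -- (1,0) → (0,0) : wrap around
        subst hi2
        refine ⟨hins, ?_⟩
        rw [show ((1 : ℤ) - 1) = 0 by norm_num, rho_row0, rho_col0 n m one_ne_zero]
        rw [show ((m : ℤ) + 2 + (n : ℤ) * ((m : ℤ) + 1) + ((n : ℤ) - 1) + 1)
            = ((n : ℤ) + 1) * ((m : ℤ) + 2) by ring, Int.emod_self]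
      · refine ⟨hins, finish_mod ?_ hb.1 hb.2⟩
        rw [rho_col0 n m (show i - 1 ≠ 0 by omega), rho_col0 n m (show i ≠ 0 by omega)]
        ring
    · rcases eq_or_ne j 1 with hj1 | hj1
      · subst hj1
        rcases eq_or_ne i (n : ℤ) with hin | hin
        · -- (n,1) → (n,0)
          subst hin
          have hsuc : suc n m ((n : ℤ), (1 : ℤ)) = ((n : ℤ), 0) := by
            rw [suc, if_neg, if_pos (Or.inl rfl)]
            · norm_num
            · intro hc; simp only [Prod.mk.injEq, Int.even_iff, Int.odd_iff] at hc; omega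
          rw [hsuc]
          have hins : inside n m ((n : ℤ), (0 : ℤ)) :=
            ⟨by omega, le_refl _, le_refl _, by omega⟩
          have hb := rho_bound n m hn hm _ hins
          refine ⟨hins, finish_mod ?_ hb.1 hb.2⟩
          rw [rho_col0 n m (show (n : ℤ) ≠ 0 by omega),
            rho_inner n m (show (n : ℤ) ≠ 0 by omega) (show (1 : ℤ) ≠ 0 by omega),
            if_pos hodd]
          ring
        · -- (i,1), i odd < n → (i+1,1)
          have hsuc : suc n m (i, (1 : ℤ)) = (i + 1, 1) := by
            rw [suc, if_neg, if_neg, if_pos (Or.inl ⟨hOi, rfl, hin⟩)]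
            · intro hc; simp only [Prod.mk.injEq, Int.even_iff, Int.odd_iff] at hc; omega
            · intro hc; simp only [Prod.mk.injEq, Int.even_iff, Int.odd_iff] at hc; omega
          rw [hsuc]
          have hins : inside n m (i + 1, (1 : ℤ)) := ⟨by omega, by omega, by omega, by omega⟩
          have hb := rho_bound n m hn hm _ hins
          refine ⟨hins, finish_mod ?_ hb.1 hb.2⟩
          rw [rho_inner n m (show i + 1 ≠ 0 by omega) (show (1 : ℤ) ≠ 0 by omega),
            rho_inner n m (show i ≠ 0 by omega) (show (1 : ℤ) ≠ 0 by omega),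
            if_neg (show ¬ (i + 1) % 2 = 1 by omega), if_pos ipar]
          ring
      · -- i odd, 2 ≤ j ≤ m+1 : go left
        have hsuc : suc n m (i, j) = (i, j - 1) := by
          rw [suc, if_neg, if_pos (Or.inr ⟨hOi, by omega, h4⟩)]
          intro hc; simp only [Prod.mk.injEq, Int.even_iff, Int.odd_iff] at hc; omega
        rw [hsuc]
        have hins : inside n m (i, j - 1) := ⟨h1, h2, by omega, by omega⟩
        have hb := rho_bound n m hn hm _ hins
        refine ⟨hins, finish_mod ?_ hb.1 hb.2⟩
        rw [rho_inner n m (show i ≠ 0 by omega) (show j - 1 ≠ 0 by omega),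
          rho_inner n m (show i ≠ 0 by omega) hj0, if_pos ipar, if_pos ipar]
        ring

end CA

namespace CA

lemma snake_reach (n m : ℕ) (hn : 1 ≤ n) (hnodd : Odd n) (hm : 1 ≤ m)
    {p q : ℤ × ℤ} (hp : inside n m p) (hq : inside n m q) :
    ∃ t : ℕ, (suc n m)^[t] p = q := by
  set N : ℤ := ((n : ℤ) + 1) * ((m : ℤ) + 2) with hN
  have hNpos : (0 : ℤ) < N := by positivity
  have iter : ∀ t : ℕ, inside n m ((suc n m)^[t] p) ∧
      rho n m ((suc n m)^[t] p) = (rho n m p + t) % N := by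
    intro t
    induction t with
    | zero =>
      refine ⟨hp, ?_⟩
      have hb := rho_bound n m hn hm p hp
      simpa using (Int.emod_eq_of_lt hb.1 hb.2).symm
    | succ t ih =>
      obtain ⟨hi, hr⟩ := ih
      obtain ⟨hi', hr'⟩ := suc_step n m hn hnodd hm _ hi
      rw [Function.iterate_succ_apply']
      refine ⟨hi', ?_⟩
      rw [hr', hr, ← hN, Int.emod_add_emod]
      push_cast
      ring_nf
  refine ⟨((rho n m q - rho n m p) % N).toNat, ?_⟩
  obtain ⟨hi, hr⟩ := iter ((rho n m q - rho n m p) % N).toNat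
  have hb := rho_bound n m hn hm q hq
  have hmod : 0 ≤ (rho n m q - rho n m p) % N := Int.emod_nonneg _ (ne_of_gt hNpos)
  have hrq : rho n m ((suc n m)^[((rho n m q - rho n m p) % N).toNat] p) = rho n m q := by
    rw [hr, Int.toNat_of_nonneg hmod, Int.add_comm (rho n m p), Int.emod_add_emod,
      show rho n m q - rho n m p + rho n m p = rho n m q by ring]
    exact Int.emod_eq_of_lt hb.1 hb.2
  exact rho_inj n m hn hm hi hq hrq

lemma coord_of_valid (n m : ℕ) {s : CellState} (hv : ValidState n m s) (hne : s ≠ qState) :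
    ∃ z : ℤ × ℤ, s.coord = (some z.1, some z.2) ∧ inside n m z := by
  rcases hv with ⟨l, h⟩ | ⟨i, l, hi1, hi2, h⟩ | ⟨j, a, l, hj1, hj2, h⟩ | ⟨l, h⟩ |
      ⟨i, pc, l, hi1, hi2, h⟩ | ⟨i, j, fl, a, pd, l, hi1, hi2, hj1, hj2, -, h⟩ | h
  · exact ⟨(0, 0), by rw [h], by refine ⟨le_refl _, by positivity, le_refl _, by positivity⟩⟩
  · exact ⟨(i, 0), by rw [h], by refine ⟨by omega, hi2, le_refl _, by positivity⟩⟩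
  · exact ⟨(0, j), by rw [h], by refine ⟨le_refl _, by positivity, by omega, by omega⟩⟩
  · exact ⟨(0, (m : ℤ) + 1), by rw [h],
      by refine ⟨le_refl _, by positivity, by positivity, le_refl _⟩⟩
  · exact ⟨(i, (m : ℤ) + 1), by rw [h], by refine ⟨by omega, hi2, by positivity, le_refl _⟩⟩
  · exact ⟨(i, j), by rw [h], by refine ⟨by omega, hi2, by omega, by omega⟩⟩
  · exact absurd h hne

end CA

open Fin.NatCast

open CA in
/-- If a configuration `C ∈ Config_{n,m}` contains a cycle
(a nonempty cyclic sequence of blue cells, each followed by its successor),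
then every cell of `C` inside the rectangle belongs to this cycle. -/
theorem stmt_6 (n m : ℕ) (hn : 1 ≤ n) (hnodd : Odd n) (hm : 1 ≤ m) (φ : CNF)
    (C : Cfg) (hC : IsConfig n m C) (s : ℕ) (c : Fin (s + 1) → ℤ × ℤ)
    (hblue : ∀ k : Fin (s + 1), Blue φ n m C (c k))
    (hsucc : ∀ k : Fin (s + 1), IsSucc n m C (c k) (c (k + 1))) :
    ∀ p : ℤ × ℤ, inside n m p → ∃ k : Fin (s + 1), c k = p := by
  obtain ⟨hC1, hCin, hCout⟩ := hC
  have hcin : ∀ k : Fin (s + 1), inside n m (c k) := by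
    intro k
    by_contra hcon
    exact (hblue k).1 (hCout _ hcon)
  have hex : ∀ k : Fin (s + 1), ∃ z : ℤ × ℤ,
      (C (c k)).coord = (some z.1, some z.2) ∧ inside n m z :=
    fun k => coord_of_valid n m (hC1 (c k)) (hblue k).1
  choose x hx hxin using hex
  have hstepk : ∀ k : Fin (s + 1), x (k + 1) = suc n m (x k) ∧
      (c (k + 1)).1 = (c k).1 + ((suc n m (x k)).1 - (x k).1) ∧
      (c (k + 1)).2 = (c k).2 + ((suc n m (x k)).2 - (x k).2) := by
    intro k
    obtain ⟨hvn, i, j, hpc, hqc⟩ := hsucc k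
    rw [hx k] at hpc
    simp only [Prod.mk.injEq, Option.some.injEq] at hpc
    obtain ⟨hi, hj⟩ := hpc
    subst hi; subst hj
    simp only [Prod.mk.eta] at hqc
    have hxeq : x (k + 1) = suc n m (x k) := by
      have h2 := hqc.symm.trans (hx (k + 1))
      simp only [Prod.mk.injEq, Option.some.injEq] at h2
      exact Prod.ext h2.1.symm h2.2.symm
    have hA := (hblue k).2.1.1
    obtain ⟨hb1, hb2, hb3, hb4⟩ := hxin k
    have hiff := (hA (x k).1 (x k).2 hb1 hb2 hb3 hb4).mp (hx k)
    obtain ⟨hR, hL, hB, hT⟩ := hiff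
    refine ⟨hxeq, ?_⟩
    rcases hvn with h | h | h | h
    · by_cases hin2 : inside n m ((x k).1, (x k).2 + 1)
      · have hco := hR.1 hin2
        rw [← h, hqc] at hco
        simp only [Prod.mk.injEq, Option.some.injEq] at hco
        rw [h]
        simp only [rightN]
        omega
      · have hqq := hR.2 hin2
        rw [← h] at hqq
        rw [hqq] at hqc
        simp [qState] at hqc
    · by_cases hin2 : inside n m ((x k).1, (x k).2 - 1)
      · have hco := hL.1 hin2
        rw [← h, hqc] at hco
        simp only [Prod.mk.injEq, Option.some.injEq] at hco
        rw [h]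
        simp only [leftN]
        omega
      · have hqq := hL.2 hin2
        rw [← h] at hqq
        rw [hqq] at hqc
        simp [qState] at hqc
    · by_cases hin2 : inside n m ((x k).1 + 1, (x k).2)
      · have hco := hB.1 hin2
        rw [← h, hqc] at hco
        simp only [Prod.mk.injEq, Option.some.injEq] at hco
        rw [h]
        simp only [belowN]
        omega
      · have hqq := hB.2 hin2
        rw [← h] at hqq
        rw [hqq] at hqc
        simp [qState] at hqc
    · by_cases hin2 : inside n m ((x k).1 - 1, (x k).2)
      · have hco := hT.1 hin2
        rw [← h, hqc] at hco
        simp only [Prod.mk.injEq, Option.some.injEq] at hco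
        rw [h]
        simp only [aboveN]
        omega
      · have hqq := hT.2 hin2
        rw [← h] at hqq
        rw [hqq] at hqc
        simp [qState] at hqc
  have hconst : ∀ t : ℕ, x ((t : Fin (s + 1))) = (suc n m)^[t] (x 0) ∧
      (c ((t : Fin (s + 1)))).1 - (x ((t : Fin (s + 1)))).1 = (c 0).1 - (x 0).1 ∧
      (c ((t : Fin (s + 1)))).2 - (x ((t : Fin (s + 1)))).2 = (c 0).2 - (x 0).2 := by
    intro t
    induction t with
    | zero => refine ⟨by simp, by simp, by simp⟩
    | succ t ih =>
      obtain ⟨h1, h2, h3⟩ := ih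
      obtain ⟨hs1, hs2, hs3⟩ := hstepk ((t : Fin (s + 1)))
      have hcast : ((t + 1 : ℕ) : Fin (s + 1)) = (t : Fin (s + 1)) + 1 := by
        push_cast; ring
      refine ⟨by rw [hcast, hs1, Function.iterate_succ_apply', h1], ?_, ?_⟩
      · rw [hcast, hs1, hs2]; omega
      · rw [hcast, hs1, hs3]; omega
  have hin00 : inside n m ((0 : ℤ), (0 : ℤ)) :=
    ⟨le_refl _, Int.natCast_nonneg n, le_refl _, by positivity⟩
  have hinNM : inside n m ((n : ℤ), (m : ℤ) + 1) :=
    ⟨Int.natCast_nonneg n, le_refl _, by positivity, le_refl _⟩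
  obtain ⟨t0, ht0⟩ := snake_reach n m hn hnodd hm (hxin 0) hin00
  obtain ⟨t1, ht1⟩ := snake_reach n m hn hnodd hm (hxin 0) hinNM
  obtain ⟨e0, f0, g0⟩ := hconst t0
  obtain ⟨e1, f1, g1⟩ := hconst t1
  rw [ht0] at e0
  rw [ht1] at e1
  have a01 : (x (t0 : Fin (s + 1))).1 = 0 := by rw [e0]
  have a02 : (x (t0 : Fin (s + 1))).2 = 0 := by rw [e0]
  have a11 : (x (t1 : Fin (s + 1))).1 = (n : ℤ) := by rw [e1]
  have a12 : (x (t1 : Fin (s + 1))).2 = (m : ℤ) + 1 := by rw [e1]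
  obtain ⟨u1, u2, u3, u4⟩ := hcin (t0 : Fin (s + 1))
  obtain ⟨v1, v2, v3, v4⟩ := hcin (t1 : Fin (s + 1))
  have hd1 : (c 0).1 - (x 0).1 = 0 := by omega
  have hd2 : (c 0).2 - (x 0).2 = 0 := by omega
  intro p hp
  obtain ⟨t, ht⟩ := snake_reach n m hn hnodd hm (hxin 0) hp
  obtain ⟨e, f, g⟩ := hconst t
  rw [ht] at e
  rw [e] at f g
  refine ⟨(t : Fin (s + 1)), Prod.ext (by omega) (by omega)⟩
end

section
/- Let C, C′ ∈ Config_{n,m} with C ∼ C′, and let γ = (c₁,…,c_t) be a pointed chain in C (hence also in C′). For each k let s_k be the state of c_k in C and s_k′ its state in C′. If there exists an index k with label(s_k) ≠ label(s_k′), then there exists an index ℓ ∈ {1,…,t} such that the states A_φ(C)(c_ℓ) and A_φ(C′)(c_ℓ) have different labels. (In other words, A_φ is injective when restricted to pointed chains.) -/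
section Aux
open CA

lemma aux_valid_label {n m : ℕ} {s : CellState} (h : ValidState n m s)
    (hs : s ≠ qState) : ∃ l : Bool, s.label = some l := by
  rcases h with ⟨l, rfl⟩ | ⟨i, l, _, _, rfl⟩ | ⟨j, a, l, _, _, rfl⟩ | ⟨l, rfl⟩ |
    ⟨i, pc, l, _, _, rfl⟩ | ⟨i, j, fl, a, pd, l, _, _, _, _, _, rfl⟩ | rfl
  · exact ⟨l, rfl⟩
  · exact ⟨l, rfl⟩
  · exact ⟨l, rfl⟩
  · exact ⟨l, rfl⟩
  · exact ⟨l, rfl⟩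
  · exact ⟨l, rfl⟩
  · exact absurd rfl hs

lemma aux_valid_coord {n m : ℕ} {s : CellState} (h : ValidState n m s)
    (hs : s ≠ qState) : ∃ i j : ℤ, s.coord = (some i, some j) ∧
      0 ≤ i ∧ i ≤ (n : ℤ) ∧ 0 ≤ j ∧ j ≤ (m : ℤ) + 1 := by
  rcases h with ⟨l, rfl⟩ | ⟨i, l, h1, h2, rfl⟩ | ⟨j, a, l, h1, h2, rfl⟩ | ⟨l, rfl⟩ |
    ⟨i, pc, l, h1, h2, rfl⟩ | ⟨i, j, fl, a, pd, l, h1, h2, h3, h4, _, rfl⟩ | rfl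
  · exact ⟨0, 0, rfl, by omega, by omega, by omega, by omega⟩
  · exact ⟨i, 0, rfl, by omega, by omega, by omega, by omega⟩
  · exact ⟨0, j, rfl, by omega, by omega, by omega, by omega⟩
  · exact ⟨0, (m : ℤ) + 1, rfl, by omega, by omega, by omega, by omega⟩
  · exact ⟨i, (m : ℤ) + 1, rfl, by omega, by omega, by omega, by omega⟩
  · exact ⟨i, j, rfl, by omega, by omega, by omega, by omega⟩
  · exact absurd rfl hs

lemma aux_succPos_of_coord {n m : ℕ} {C : Cfg} {p : ℤ × ℤ} {i j : ℤ}
    (h : (C p).coord = (some i, some j)) :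
    succPos n m C p =
      (p.1 + ((suc n m (i, j)).1 - i), p.2 + ((suc n m (i, j)).2 - j)) := by
  unfold succPos
  rw [h]

lemma aux_step_label_blue {φ : CNF} {n m : ℕ} {C : Cfg} {p : ℤ × ℤ}
    (h : Blue φ n m C p) :
    (step φ n m C p).label =
      Option.map₂ Bool.xor ((C p).label) ((C (succPos n m C p)).label) := by
  unfold step
  rw [if_pos h]

lemma aux_step_label_red {φ : CNF} {n m : ℕ} {C : Cfg} {p : ℤ × ℤ}
    (h : ¬ Blue φ n m C p) : (step φ n m C p).label = (C p).label := by
  unfold step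
  rw [if_neg h]

lemma aux_succPos_eq {φ : CNF} {n m : ℕ} {C : Cfg} {p q : ℤ × ℤ}
    (hC : IsConfig n m C) (hb : Blue φ n m C p) (hs : IsSucc n m C p q) :
    succPos n m C p = q := by
  obtain ⟨hnq, hlc, -⟩ := hb
  obtain ⟨i, j, hcp, hi0, hin, hj0, hjm⟩ := aux_valid_coord (hC.1 p) hnq
  obtain ⟨hnbr, i', j', hcp', hcq⟩ := hs
  rw [hcp] at hcp'
  simp only [Prod.mk.injEq, Option.some.injEq] at hcp'
  obtain ⟨rfl, rfl⟩ := hcp'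
  have hall := (hlc.1 i j hi0 hin hj0 hjm).mp hcp
  have hred : succPos n m C p =
      (p.1 + ((suc n m (i, j)).1 - i), p.2 + ((suc n m (i, j)).2 - j)) :=
    aux_succPos_of_coord hcp
  rcases hnbr with h | h | h | h <;> subst h
  · obtain ⟨hins, houts⟩ := hall.1
    by_cases hI : inside n m (i, j + 1)
    · have h1 := hins hI
      rw [hcq] at h1
      simp only [Prod.mk.injEq, Option.some.injEq] at h1
      rw [hred, h1.1, h1.2, rightN]
      simp only [Prod.mk.injEq]
      constructor <;> ring
    · rw [houts hI] at hcq
      simp [qState] at hcq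
  · obtain ⟨hins, houts⟩ := hall.2.1
    by_cases hI : inside n m (i, j - 1)
    · have h1 := hins hI
      rw [hcq] at h1
      simp only [Prod.mk.injEq, Option.some.injEq] at h1
      rw [hred, h1.1, h1.2, leftN]
      simp only [Prod.mk.injEq]
      constructor <;> ring
    · rw [houts hI] at hcq
      simp [qState] at hcq
  · obtain ⟨hins, houts⟩ := hall.2.2.1
    by_cases hI : inside n m (i + 1, j)
    · have h1 := hins hI
      rw [hcq] at h1
      simp only [Prod.mk.injEq, Option.some.injEq] at h1
      rw [hred, h1.1, h1.2, belowN]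
      simp only [Prod.mk.injEq]
      constructor <;> ring
    · rw [houts hI] at hcq
      simp [qState] at hcq
  · obtain ⟨hins, houts⟩ := hall.2.2.2
    by_cases hI : inside n m (i - 1, j)
    · have h1 := hins hI
      rw [hcq] at h1
      simp only [Prod.mk.injEq, Option.some.injEq] at h1
      rw [hred, h1.1, h1.2, aboveN]
      simp only [Prod.mk.injEq]
      constructor <;> ring
    · rw [houts hI] at hcq
      simp [qState] at hcq

end Aux

open CA in
/-- `A_φ` is injective on pointed chains: if `C ∼ C'` and the
labels along a pointed chain `(c 0, …, c (t−1))` of `C` differ somewhere between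
`C` and `C'`, then the labels of the images differ at some cell of the chain. -/
theorem stmt_7 (n m : ℕ) (hn : 1 ≤ n) (hnodd : Odd n) (hm : 1 ≤ m) (φ : CNF)
    (C C' : Cfg) (hC : IsConfig n m C) (hC' : IsConfig n m C')
    (hsim : Similar C C') (t : ℕ) (ht : 1 ≤ t) (c : ℕ → ℤ × ℤ)
    (hblue : ∀ k : ℕ, k < t - 1 → Blue φ n m C (c k))
    (hred : ¬ Blue φ n m C (c (t - 1)))
    (hchain : ∀ k : ℕ, k + 1 < t → IsSucc n m C (c k) (c (k + 1)))
    (hdiff : ∃ k : ℕ, k < t ∧ (C (c k)).label ≠ (C' (c k)).label) :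
    ∃ l : ℕ, l < t ∧ (step φ n m C (c l)).label ≠ (step φ n m C' (c l)).label := by
  classical
  have hcoord : ∀ p, (C p).coord = (C' p).coord := fun p => (hsim p).1
  have hflag : ∀ p, (C p).flag = (C' p).flag := fun p => (hsim p).2.1
  have haval : ∀ p, (C p).aval = (C' p).aval := fun p => (hsim p).2.2.1
  have hpd : ∀ p, (C p).pd = (C' p).pd := fun p => (hsim p).2.2.2.1
  have hpc : ∀ p, (C p).pc = (C' p).pc := fun p => (hsim p).2.2.2.2
  have hq : ∀ p, C p = qState ↔ C' p = qState := by
    intro p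
    constructor
    · intro h
      exact hC'.2.2 p (fun hin => hC.2.1 p hin h)
    · intro h
      exact hC.2.2 p (fun hin => hC'.2.1 p hin h)
  have hlc : ∀ p, LocallyCorrect φ n m C p ↔ LocallyCorrect φ n m C' p := by
    intro p
    unfold LocallyCorrect ruleA ruleB ruleC1 ruleC2 ruleC3 ruleD1 ruleD2 ruleE
      nbrCoordOK litHolds
    simp only [hcoord, hflag, haval, hpd, hpc, hq]
  have hblue' : ∀ p, Blue φ n m C p ↔ Blue φ n m C' p := by
    intro p
    unfold Blue
    simp only [ne_eq, hq, hlc, hcoord, hpc]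
  have hsuccPos : ∀ p, succPos n m C p = succPos n m C' p := by
    intro p
    unfold succPos
    rw [hcoord p]
  have hnonqL : ∀ p, C p ≠ qState → ∃ l, (C p).label = some l :=
    fun p h => aux_valid_label (hC.1 p) h
  have hnonqL' : ∀ p, C' p ≠ qState → ∃ l, (C' p).label = some l :=
    fun p h => aux_valid_label (hC'.1 p) h
  by_contra hcon
  push_neg at hcon
  have key : ∀ d : ℕ, d < t →
      (C (c (t - 1 - d))).label = (C' (c (t - 1 - d))).label := by
    intro d
    induction d with
    | zero =>
      intro _
      have hred' : ¬ Blue φ n m C' (c (t - 1)) := fun h => hred ((hblue' _).mpr h)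
      have h1 := hcon (t - 1) (by omega)
      rw [aux_step_label_red hred, aux_step_label_red hred'] at h1
      simpa using h1
    | succ d ih =>
      intro hd
      have hkd := ih (by omega)
      set k := t - 1 - (d + 1) with hk
      have hk1 : k + 1 = t - 1 - d := by omega
      have hkt : k < t - 1 := by omega
      have hbk := hblue k hkt
      have hbk' : Blue φ n m C' (c k) := (hblue' _).mp hbk
      have hch := hchain k (by omega)
      have hsp : succPos n m C (c k) = c (k + 1) := aux_succPos_eq hC hbk hch
      have hsp' : succPos n m C' (c k) = c (k + 1) := by
        rw [← hsuccPos]; exact hsp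
      have hstep := hcon k (by omega)
      have hkd' : (C (c (k + 1))).label = (C' (c (k + 1))).label := by
        rw [hk1]; exact hkd
      obtain ⟨a, ha⟩ := hnonqL (c k) hbk.1
      obtain ⟨a', ha'⟩ := hnonqL' (c k) hbk'.1
      have hq1 : C (c (k + 1)) ≠ qState := by
        obtain ⟨-, i, j, -, hcq⟩ := hch
        intro hqq
        rw [hqq] at hcq
        simp [qState] at hcq
      obtain ⟨b, hb⟩ := hnonqL (c (k + 1)) hq1
      have hb' : (C' (c (k + 1))).label = some b := by rw [← hkd']; exact hb
      rw [aux_step_label_blue hbk, aux_step_label_blue hbk', hsp, hsp', ha, ha',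
        hb, hb'] at hstep
      simp only [Option.map₂, Option.bind_some, Option.map_some, Option.some.injEq]
        at hstep
      have haa : a = a' := by
        cases a <;> cases a' <;> cases b <;> simp_all
      rw [ha, ha', haa]
  obtain ⟨k, hkt, hne⟩ := hdiff
  have hd : t - 1 - (t - 1 - k) = k := by omega
  have hkey := key (t - 1 - k) (by omega)
  rw [hd] at hkey
  exact hne hkey
end

section
/- Let X be a type, R ⊆ X a set of 'red' elements, and suc : X → X a function such that for every x ∉ R there exists k ≥ 1 with suc^[k](x) ∈ R (every non-red element reaches R under iteration of suc). Define F : (X → {0,1}) → (X → {0,1}) by F(L)(x) = L(x) if x ∈ R, and F(L)(x) = L(x) ⊕ L(suc(x)) if x ∉ R. Then F is injective. -/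
open scoped Classical in
/-- Let `R ⊆ X` be the red elements and `suc : X → X` such
that every non-red element reaches `R` under iteration of `suc`.  Then the map
`F(L)(x) = L(x)` for `x ∈ R`, `F(L)(x) = L(x) ⊕ L(suc x)` for `x ∉ R`,
is injective. -/
theorem stmt_13 (X : Type*) (R : Set X) (suc : X → X)
    (hreach : ∀ x ∉ R, ∃ k : ℕ, 1 ≤ k ∧ suc^[k] x ∈ R)
    (F : (X → Bool) → (X → Bool))
    (hF : ∀ (L : X → Bool) (x : X),
      F L x = if x ∈ R then L x else Bool.xor (L x) (L (suc x))) :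
    Function.Injective F := by
  intro L1 L2 h
  have key : ∀ k : ℕ, ∀ x : X, suc^[k] x ∈ R → L1 x = L2 x := by
    intro k
    induction k with
    | zero =>
      intro x hx
      simp only [Function.iterate_zero, id_eq] at hx
      have := congrFun h x
      rwa [hF, hF, if_pos hx, if_pos hx] at this
    | succ k ih =>
      intro x hx
      by_cases hxR : x ∈ R
      · have := congrFun h x
        rwa [hF, hF, if_pos hxR, if_pos hxR] at this
      · have hs : suc^[k] (suc x) ∈ R := by
          rwa [← Function.iterate_succ_apply]
        have hnext := ih (suc x) hs
        have := congrFun h x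
        rw [hF, hF, if_neg hxR, if_neg hxR, hnext] at this
        cases h1 : L1 x <;> cases h2 : L2 x <;>
          simp_all [Bool.xor]
  funext x
  by_cases hxR : x ∈ R
  · exact key 0 x (by simpa using hxR)
  · obtain ⟨k, _, hk⟩ := hreach x hxR
    exact key k x hk
end

section
/- Fix odd n ≥ 1 and m ≥ 1, and define suc on the rectangle [n+1]×[m+2] (where [k] = {0,…,k−1}) by: suc(i,j) = (i,j+1) if (i,j) = (0,0) or (i is even and 1 ≤ j ≤ m); suc(i,j) = (i,j−1) if (i,j) = (n,1) or (i is odd and 2 ≤ j ≤ m+1); suc(i,j) = (i+1,j) if (i is odd, j = 1 and i ≠ n) or (i is even and j = m+1); suc(i,j) = (i−1,j) if i ≥ 1 and j = 0. Then (a) suc maps [n+1]×[m+2] into itself and suc(i,j) is always a von Neumann neighbour of (i,j) (it differs from (i,j) by exactly 1 in exactly one coordinate); and (b) suc acts on [n+1]×[m+2] as a single cyclic permutation: for all cells c, c′ ∈ [n+1]×[m+2] there exists k ≥ 0 with suc^[k](c) = c′. -/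
/-- The position `p` lies inside the rectangle `[n+1] × [m+2]`. -/
def insideRect (n m : ℕ) (p : ℤ × ℤ) : Prop :=
  0 ≤ p.1 ∧ p.1 ≤ (n : ℤ) ∧ 0 ≤ p.2 ∧ p.2 ≤ (m : ℤ) + 1

open scoped Classical in
/-- The snake-like successor map on the rectangle `[n+1] × [m+2]`. -/
noncomputable def sucMap (n m : ℕ) (p : ℤ × ℤ) : ℤ × ℤ :=
  if p = (0, 0) ∨ (Even p.1 ∧ 1 ≤ p.2 ∧ p.2 ≤ (m : ℤ)) then (p.1, p.2 + 1)
  else if p = ((n : ℤ), 1) ∨ (Odd p.1 ∧ 2 ≤ p.2 ∧ p.2 ≤ (m : ℤ) + 1) then (p.1, p.2 - 1)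
  else if (Odd p.1 ∧ p.2 = 1 ∧ p.1 ≠ (n : ℤ)) ∨ (Even p.1 ∧ p.2 = (m : ℤ) + 1) then
    (p.1 + 1, p.2)
  else (p.1 - 1, p.2)

def posAux (n m a : ℕ) : ℤ × ℤ :=
  if a ≤ m + 1 then ((0 : ℤ), (a : ℤ))
  else if a < (m + 2) + n * (m + 1) then
    ((((a - (m + 2)) / (m + 1) : ℕ) : ℤ) + 1,
      if Even ((a - (m + 2)) / (m + 1)) then
        ((m : ℤ) + 1) - (((a - (m + 2)) % (m + 1) : ℕ) : ℤ)
      else 1 + (((a - (m + 2)) % (m + 1) : ℕ) : ℤ))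
  else ((n : ℤ) - ((a - ((m + 2) + n * (m + 1)) : ℕ) : ℤ), 0)

lemma posAux_row0 (n m a : ℕ) (h : a ≤ m + 1) : posAux n m a = ((0 : ℤ), (a : ℤ)) := by
  simp [posAux, h]

lemma posAux_mid (n m q t : ℕ) (hq : q < n) (ht : t ≤ m) :
    posAux n m ((m + 2) + q * (m + 1) + t) =
      ((q : ℤ) + 1, if Even q then ((m : ℤ) + 1) - (t : ℤ) else 1 + (t : ℤ)) := by
  have hmul : (q + 1) * (m + 1) ≤ n * (m + 1) := Nat.mul_le_mul_right _ (by omega)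
  have hmul2 : (q + 1) * (m + 1) = q * (m + 1) + (m + 1) := by ring
  have h1 : ¬ ((m + 2) + q * (m + 1) + t ≤ m + 1) := by omega
  have h2 : (m + 2) + q * (m + 1) + t < (m + 2) + n * (m + 1) := by omega
  have hsub : (m + 2) + q * (m + 1) + t - (m + 2) = (m + 1) * q + t := by
    rw [Nat.mul_comm]; omega
  have hd : ((m + 1) * q + t) / (m + 1) = q := by
    rw [Nat.mul_add_div (by omega), Nat.div_eq_of_lt (by omega)]
    omega
  have hmo : ((m + 1) * q + t) % (m + 1) = t := by
    rw [Nat.mul_add_mod, Nat.mod_eq_of_lt (by omega)]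
  simp only [posAux, if_neg h1, if_pos h2, hsub, hd, hmo]

lemma posAux_tail (n m s : ℕ) (_hs : s < n) :
    posAux n m ((m + 2) + n * (m + 1) + s) = ((n : ℤ) - (s : ℤ), 0) := by
  have h1 : ¬ ((m + 2) + n * (m + 1) + s ≤ m + 1) := by omega
  have h2 : ¬ ((m + 2) + n * (m + 1) + s < (m + 2) + n * (m + 1)) := by omega
  simp only [posAux, if_neg h1, if_neg h2]
  congr 1
  omega

lemma sucMap_posAux (n m : ℕ) (hn : 1 ≤ n) (hnodd : Odd n) (hm : 1 ≤ m)
    (a : ℕ) (ha : a < (n + 1) * (m + 2)) :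
    sucMap n m (posAux n m a) = posAux n m ((a + 1) % ((n + 1) * (m + 2))) := by
  have hN : (n + 1) * (m + 2) = (m + 2) + n * (m + 1) + n := by ring
  obtain ⟨nn, hnn⟩ := hnodd
  rcases Nat.lt_or_ge a (m + 2) with hc | hc
  · -- row 0
    rcases Nat.lt_or_ge a (m + 1) with h0 | h0
    · -- going right along row 0
      rw [posAux_row0 n m a (by omega),
        Nat.mod_eq_of_lt (by omega), posAux_row0 n m (a + 1) (by omega)]
      have h1 : ((0 : ℤ), (a : ℤ)) = ((0 : ℤ), (0 : ℤ)) ∨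
          (Even (0 : ℤ) ∧ 1 ≤ (a : ℤ) ∧ (a : ℤ) ≤ (m : ℤ)) := by
        rcases Nat.eq_zero_or_pos a with h | h
        · left; simp [h]
        · right; exact ⟨Even.zero, by omega, by omega⟩
      rw [sucMap, if_pos h1]
      simp [Prod.ext_iff]
      all_goals (push_cast; omega)
    · -- corner (0, m+1)
      have haeq : a = m + 1 := by omega
      subst haeq
      rw [posAux_row0 n m (m + 1) le_rfl,
        Nat.mod_eq_of_lt (by omega),
        show m + 1 + 1 = (m + 2) + 0 * (m + 1) + 0 by ring,
        posAux_mid n m 0 0 (by omega) (by omega), if_pos (Even.zero)]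
      have h1 : ¬ (((0 : ℤ), ((m + 1 : ℕ) : ℤ)) = ((0 : ℤ), (0 : ℤ)) ∨
          (Even (0 : ℤ) ∧ 1 ≤ ((m + 1 : ℕ) : ℤ) ∧ ((m + 1 : ℕ) : ℤ) ≤ (m : ℤ))) := by
        rintro (h | ⟨-, -, h⟩)
        · rw [Prod.mk.injEq] at h; omega
        · omega
      have h2 : ¬ (((0 : ℤ), ((m + 1 : ℕ) : ℤ)) = ((n : ℤ), (1 : ℤ)) ∨
          (Odd (0 : ℤ) ∧ 2 ≤ ((m + 1 : ℕ) : ℤ) ∧ ((m + 1 : ℕ) : ℤ) ≤ (m : ℤ) + 1)) := by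
        rintro (h | ⟨h, -, -⟩)
        · rw [Prod.mk.injEq] at h; omega
        · exact (Int.not_odd_iff_even.mpr Even.zero) h
      have h3 : (Odd (0 : ℤ) ∧ ((m + 1 : ℕ) : ℤ) = 1 ∧ (0 : ℤ) ≠ (n : ℤ)) ∨
          (Even (0 : ℤ) ∧ ((m + 1 : ℕ) : ℤ) = (m : ℤ) + 1) := by
        right; exact ⟨Even.zero, by push_cast; ring⟩
      rw [sucMap, if_neg h1, if_neg h2, if_pos h3]
      simp [Prod.ext_iff]
      all_goals (push_cast; omega)
  rcases Nat.lt_or_ge a ((m + 2) + n * (m + 1)) with hc2 | hc2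
  · -- snake rows 1..n
    obtain ⟨q, t, ht, haeq⟩ : ∃ q t, t ≤ m ∧ a = (m + 2) + q * (m + 1) + t := by
      refine ⟨(a - (m + 2)) / (m + 1), (a - (m + 2)) % (m + 1), ?_, ?_⟩
      · have := Nat.mod_lt (a - (m + 2)) (y := m + 1) (by omega); omega
      · have hdm := Nat.div_add_mod (a - (m + 2)) (m + 1)
        have hcomm : (m + 1) * ((a - (m + 2)) / (m + 1)) =
            ((a - (m + 2)) / (m + 1)) * (m + 1) := by ring
        omega
    have hq : q < n := by
      by_contra hcon
      have : n * (m + 1) ≤ q * (m + 1) := Nat.mul_le_mul_right _ (by omega)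
      omega
    have hmul : (q + 1) * (m + 1) ≤ n * (m + 1) := Nat.mul_le_mul_right _ (by omega)
    have hmul2 : (q + 1) * (m + 1) = q * (m + 1) + (m + 1) := by ring
    rw [haeq, posAux_mid n m q t hq ht]
    rcases Nat.even_or_odd q with hqe | hqo
    · -- odd row i = q+1, going left
      obtain ⟨r, hr⟩ := hqe
      have hoRow : Odd ((q : ℤ) + 1) := ⟨(r : ℤ), by push_cast [hr]; ring⟩
      have hneRow : ¬ Even ((q : ℤ) + 1) := by
        rintro ⟨s, hs⟩; obtain ⟨u, hu⟩ := hoRow; omega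
      have hqe' : Even q := ⟨r, hr⟩
      rw [if_pos hqe']
      have h1 : ¬ (((q : ℤ) + 1, ((m : ℤ) + 1) - (t : ℤ)) = ((0 : ℤ), (0 : ℤ)) ∨
          (Even ((q : ℤ) + 1) ∧ 1 ≤ ((m : ℤ) + 1) - (t : ℤ) ∧
            ((m : ℤ) + 1) - (t : ℤ) ≤ (m : ℤ))) := by
        rintro (h | ⟨h, -, -⟩)
        · rw [Prod.mk.injEq] at h; omega
        · exact hneRow h
      rcases Nat.lt_or_ge t m with htm | htm
      · -- interior: move left
        have h2 : ((q : ℤ) + 1, ((m : ℤ) + 1) - (t : ℤ)) = ((n : ℤ), (1 : ℤ)) ∨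
            (Odd ((q : ℤ) + 1) ∧ 2 ≤ ((m : ℤ) + 1) - (t : ℤ) ∧
              ((m : ℤ) + 1) - (t : ℤ) ≤ (m : ℤ) + 1) := by
          right; exact ⟨hoRow, by omega, by omega⟩
        rw [sucMap, if_neg h1, if_pos h2,
          Nat.mod_eq_of_lt (by omega),
          show (m + 2) + q * (m + 1) + t + 1 = (m + 2) + q * (m + 1) + (t + 1) by ring,
          posAux_mid n m q (t + 1) hq (by omega), if_pos hqe']
        simp [Prod.ext_iff]
        all_goals (push_cast; omega)
      · -- t = m, at column 1
        have htm' : t = m := by omega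
        rcases eq_or_ne (q + 1) n with hqn | hqn
        · -- row n : go to (n, 0)
          have hkey : q * (m + 1) + (m + 1) = n * (m + 1) := by rw [← hqn]; ring
          have h2 : ((q : ℤ) + 1, ((m : ℤ) + 1) - (t : ℤ)) = ((n : ℤ), (1 : ℤ)) ∨
              (Odd ((q : ℤ) + 1) ∧ 2 ≤ ((m : ℤ) + 1) - (t : ℤ) ∧
                ((m : ℤ) + 1) - (t : ℤ) ≤ (m : ℤ) + 1) := by
            left; rw [Prod.mk.injEq]; constructor <;> omega
          rw [sucMap, if_neg h1, if_pos h2,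
            Nat.mod_eq_of_lt (by omega),
            show (m + 2) + q * (m + 1) + t + 1 = (m + 2) + n * (m + 1) + 0 by omega,
            posAux_tail n m 0 (by omega)]
          simp [Prod.ext_iff]
          all_goals (push_cast; omega)
        · -- go down to even row q+2
          have hq1 : q + 1 < n := by omega
          have hq1e : ¬ Even (q + 1) := by rintro ⟨s, hs⟩; omega
          have h2 : ¬ (((q : ℤ) + 1, ((m : ℤ) + 1) - (t : ℤ)) = ((n : ℤ), (1 : ℤ)) ∨
              (Odd ((q : ℤ) + 1) ∧ 2 ≤ ((m : ℤ) + 1) - (t : ℤ) ∧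
                ((m : ℤ) + 1) - (t : ℤ) ≤ (m : ℤ) + 1)) := by
            rintro (h | ⟨-, h, -⟩)
            · rw [Prod.mk.injEq] at h; omega
            · omega
          have h3 : (Odd ((q : ℤ) + 1) ∧ ((m : ℤ) + 1) - (t : ℤ) = 1 ∧
                (q : ℤ) + 1 ≠ (n : ℤ)) ∨
              (Even ((q : ℤ) + 1) ∧ ((m : ℤ) + 1) - (t : ℤ) = (m : ℤ) + 1) := by
            left; exact ⟨hoRow, by omega, by intro h; omega⟩
          rw [sucMap, if_neg h1, if_neg h2, if_pos h3,
            Nat.mod_eq_of_lt (by omega),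
            show (m + 2) + q * (m + 1) + t + 1 = (m + 2) + (q + 1) * (m + 1) + 0 by
              rw [hmul2]; omega,
            posAux_mid n m (q + 1) 0 hq1 (by omega), if_neg hq1e]
          simp [Prod.ext_iff]
          all_goals (push_cast; omega)
    · -- even row i = q+1, going right
      obtain ⟨r, hr⟩ := hqo
      have heRow : Even ((q : ℤ) + 1) := ⟨(r : ℤ) + 1, by push_cast [hr]; ring⟩
      have hnoRow : ¬ Odd ((q : ℤ) + 1) := by
        rintro ⟨s, hs⟩; obtain ⟨u, hu⟩ := heRow; omega
      have hqne : ¬ Even q := by rintro ⟨s, hs⟩; omega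
      rw [if_neg hqne]
      rcases Nat.lt_or_ge t m with htm | htm
      · -- interior: move right
        have h1 : ((q : ℤ) + 1, 1 + (t : ℤ)) = ((0 : ℤ), (0 : ℤ)) ∨
            (Even ((q : ℤ) + 1) ∧ 1 ≤ 1 + (t : ℤ) ∧ 1 + (t : ℤ) ≤ (m : ℤ)) := by
          right; exact ⟨heRow, by omega, by omega⟩
        rw [sucMap, if_pos h1,
          Nat.mod_eq_of_lt (by omega),
          show (m + 2) + q * (m + 1) + t + 1 = (m + 2) + q * (m + 1) + (t + 1) by ring,
          posAux_mid n m q (t + 1) hq (by omega), if_neg hqne]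
        simp [Prod.ext_iff]
        all_goals (push_cast; omega)
      · -- t = m, at column m+1 : go down to odd row q+2
        have htm' : t = m := by omega
        have hq1 : q + 1 < n := by omega
        have hq1e : Even (q + 1) := ⟨r + 1, by omega⟩
        have h1 : ¬ (((q : ℤ) + 1, 1 + (t : ℤ)) = ((0 : ℤ), (0 : ℤ)) ∨
            (Even ((q : ℤ) + 1) ∧ 1 ≤ 1 + (t : ℤ) ∧ 1 + (t : ℤ) ≤ (m : ℤ))) := by
          rintro (h | ⟨-, -, h⟩)
          · rw [Prod.mk.injEq] at h; omega
          · omega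
        have h2 : ¬ (((q : ℤ) + 1, 1 + (t : ℤ)) = ((n : ℤ), (1 : ℤ)) ∨
            (Odd ((q : ℤ) + 1) ∧ 2 ≤ 1 + (t : ℤ) ∧ 1 + (t : ℤ) ≤ (m : ℤ) + 1)) := by
          rintro (h | ⟨h, -, -⟩)
          · rw [Prod.mk.injEq] at h; omega
          · exact hnoRow h
        have h3 : (Odd ((q : ℤ) + 1) ∧ 1 + (t : ℤ) = 1 ∧ (q : ℤ) + 1 ≠ (n : ℤ)) ∨
            (Even ((q : ℤ) + 1) ∧ 1 + (t : ℤ) = (m : ℤ) + 1) := by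
          right; exact ⟨heRow, by omega⟩
        rw [sucMap, if_neg h1, if_neg h2, if_pos h3,
          Nat.mod_eq_of_lt (by omega),
          show (m + 2) + q * (m + 1) + t + 1 = (m + 2) + (q + 1) * (m + 1) + 0 by
            rw [hmul2]; omega,
          posAux_mid n m (q + 1) 0 hq1 (by omega), if_pos hq1e]
        simp [Prod.ext_iff]
        all_goals (push_cast; omega)
  · -- column 0, going up
    obtain ⟨s, hsn, haeq⟩ : ∃ s, s < n ∧ a = (m + 2) + n * (m + 1) + s :=
      ⟨a - ((m + 2) + n * (m + 1)), by omega, by omega⟩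
    rw [haeq, posAux_tail n m s hsn]
    have h1 : ¬ (((n : ℤ) - (s : ℤ), (0 : ℤ)) = ((0 : ℤ), (0 : ℤ)) ∨
        (Even ((n : ℤ) - (s : ℤ)) ∧ 1 ≤ (0 : ℤ) ∧ (0 : ℤ) ≤ (m : ℤ))) := by
      rintro (h | ⟨-, h, -⟩)
      · rw [Prod.mk.injEq] at h; omega
      · omega
    have h2 : ¬ (((n : ℤ) - (s : ℤ), (0 : ℤ)) = ((n : ℤ), (1 : ℤ)) ∨
        (Odd ((n : ℤ) - (s : ℤ)) ∧ 2 ≤ (0 : ℤ) ∧ (0 : ℤ) ≤ (m : ℤ) + 1)) := by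
      rintro (h | ⟨-, h, -⟩)
      · rw [Prod.mk.injEq] at h; omega
      · omega
    have h3 : ¬ ((Odd ((n : ℤ) - (s : ℤ)) ∧ (0 : ℤ) = 1 ∧ (n : ℤ) - (s : ℤ) ≠ (n : ℤ)) ∨
        (Even ((n : ℤ) - (s : ℤ)) ∧ (0 : ℤ) = (m : ℤ) + 1)) := by
      rintro (⟨-, h, -⟩ | ⟨-, h⟩) <;> omega
    rw [sucMap, if_neg h1, if_neg h2, if_neg h3]
    rcases Nat.lt_or_ge s (n - 1) with hlt | hge
    · rw [Nat.mod_eq_of_lt (by omega),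
        show (m + 2) + n * (m + 1) + s + 1 = (m + 2) + n * (m + 1) + (s + 1) by ring,
        posAux_tail n m (s + 1) (by omega)]
      simp [Prod.ext_iff]
      all_goals (push_cast; omega)
    · have hsn' : s = n - 1 := by omega
      have hNs : (m + 2) + n * (m + 1) + s + 1 = (n + 1) * (m + 2) := by omega
      rw [hNs, Nat.mod_self, posAux_row0 n m 0 (by omega)]
      simp [Prod.ext_iff]
      all_goals (push_cast; omega)

lemma posAux_mem (n m : ℕ) (hn : 1 ≤ n) (hm : 1 ≤ m) (a : ℕ)
    (ha : a < (n + 1) * (m + 2)) :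
    0 ≤ (posAux n m a).1 ∧ (posAux n m a).1 ≤ (n : ℤ) ∧
      0 ≤ (posAux n m a).2 ∧ (posAux n m a).2 ≤ (m : ℤ) + 1 := by
  have hN : (n + 1) * (m + 2) = (m + 2) + n * (m + 1) + n := by ring
  rcases Nat.lt_or_ge a (m + 2) with hc | hc
  · rw [posAux_row0 n m a (by omega)]
    refine ⟨le_rfl, by omega, by omega, by omega⟩
  rcases Nat.lt_or_ge a ((m + 2) + n * (m + 1)) with hc2 | hc2
  · obtain ⟨q, t, ht, haeq⟩ : ∃ q t, t ≤ m ∧ a = (m + 2) + q * (m + 1) + t := by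
      refine ⟨(a - (m + 2)) / (m + 1), (a - (m + 2)) % (m + 1), ?_, ?_⟩
      · have := Nat.mod_lt (a - (m + 2)) (y := m + 1) (by omega); omega
      · have hdm := Nat.div_add_mod (a - (m + 2)) (m + 1)
        have hcomm : (m + 1) * ((a - (m + 2)) / (m + 1)) =
            ((a - (m + 2)) / (m + 1)) * (m + 1) := by ring
        omega
    have hq : q < n := by
      by_contra hcon
      have : n * (m + 1) ≤ q * (m + 1) := Nat.mul_le_mul_right _ (by omega)
      omega
    rw [haeq, posAux_mid n m q t hq ht]
    rcases Nat.even_or_odd q with hqe | hqo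
    · rw [if_pos hqe]
      exact ⟨by show (0:ℤ) ≤ (q:ℤ) + 1; omega, by show (q:ℤ) + 1 ≤ (n:ℤ); omega,
        by show (0:ℤ) ≤ (m:ℤ) + 1 - (t:ℤ); omega,
        by show (m:ℤ) + 1 - (t:ℤ) ≤ (m:ℤ) + 1; omega⟩
    · rw [if_neg (by rintro ⟨s, hs⟩; obtain ⟨u, hu⟩ := hqo; omega)]
      exact ⟨by show (0:ℤ) ≤ (q:ℤ) + 1; omega, by show (q:ℤ) + 1 ≤ (n:ℤ); omega,
        by show (0:ℤ) ≤ 1 + (t:ℤ); omega,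
        by show 1 + (t:ℤ) ≤ (m:ℤ) + 1; omega⟩
  · obtain ⟨s, hsn, haeq⟩ : ∃ s, s < n ∧ a = (m + 2) + n * (m + 1) + s :=
      ⟨a - ((m + 2) + n * (m + 1)), by omega, by omega⟩
    rw [haeq, posAux_tail n m s hsn]
    exact ⟨by show (0:ℤ) ≤ (n:ℤ) - (s:ℤ); omega, by show (n:ℤ) - (s:ℤ) ≤ (n:ℤ); omega,
      le_rfl, by show (0:ℤ) ≤ (m:ℤ) + 1; omega⟩

lemma posAux_surj (n m : ℕ) (hn : 1 ≤ n) (hm : 1 ≤ m) (x y : ℤ)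
    (h1 : 0 ≤ x) (h2 : x ≤ (n : ℤ)) (h3 : 0 ≤ y) (h4 : y ≤ (m : ℤ) + 1) :
    ∃ a, a < (n + 1) * (m + 2) ∧ posAux n m a = (x, y) := by
  have hN : (n + 1) * (m + 2) = (m + 2) + n * (m + 1) + n := by ring
  obtain ⟨i, hi⟩ : ∃ i : ℕ, x = (i : ℤ) := ⟨x.toNat, by omega⟩
  obtain ⟨j, hj⟩ : ∃ j : ℕ, y = (j : ℤ) := ⟨y.toNat, by omega⟩
  subst hi hj
  have hi' : i ≤ n := by omega
  have hj' : j ≤ m + 1 := by omega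
  rcases Nat.eq_zero_or_pos i with hi0 | hi0
  · exact ⟨j, by omega, by rw [posAux_row0 n m j hj']; subst hi0; simp⟩
  rcases Nat.eq_zero_or_pos j with hj0 | hj0
  · refine ⟨(m + 2) + n * (m + 1) + (n - i), by omega, ?_⟩
    rw [posAux_tail n m (n - i) (by omega)]
    subst hj0
    simp [Prod.ext_iff]
    omega
  · obtain ⟨q, hq⟩ : ∃ q, i = q + 1 := ⟨i - 1, by omega⟩
    subst hq
    have hqn : q < n := by omega
    have hmul : (q + 1) * (m + 1) ≤ n * (m + 1) := Nat.mul_le_mul_right _ (by omega)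
    have hmul2 : (q + 1) * (m + 1) = q * (m + 1) + (m + 1) := by ring
    rcases Nat.even_or_odd q with hqe | hqo
    · refine ⟨(m + 2) + q * (m + 1) + (m + 1 - j), by omega, ?_⟩
      rw [posAux_mid n m q (m + 1 - j) hqn (by omega), if_pos hqe]
      simp [Prod.ext_iff]
      all_goals (push_cast; omega)
    · refine ⟨(m + 2) + q * (m + 1) + (j - 1), by omega, ?_⟩
      rw [posAux_mid n m q (j - 1) hqn (by omega),
        if_neg (by rintro ⟨s, hs⟩; obtain ⟨u, hu⟩ := hqo; omega)]
      simp [Prod.ext_iff]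
      all_goals (push_cast; omega)

lemma iterate_posAux (n m : ℕ) (hn : 1 ≤ n) (hnodd : Odd n) (hm : 1 ≤ m)
    (k : ℕ) : ∀ a, a < (n + 1) * (m + 2) →
    (sucMap n m)^[k] (posAux n m a) = posAux n m ((a + k) % ((n + 1) * (m + 2))) := by
  induction k with
  | zero => intro a ha; simp [Nat.mod_eq_of_lt ha]
  | succ k ih =>
    intro a ha
    have hpos : 0 < (n + 1) * (m + 2) := by positivity
    rw [Function.iterate_succ_apply, sucMap_posAux n m hn hnodd hm a ha,
      ih _ (Nat.mod_lt _ hpos), Nat.mod_add_mod,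
      show a + 1 + k = a + (k + 1) by omega]

/-- For odd `n ≥ 1` and `m ≥ 1`: (a) `suc` maps the rectangle
`[n+1] × [m+2]` into itself and always moves to a von Neumann neighbour
(it changes exactly one coordinate by exactly `1`); (b) `suc` acts on the
rectangle as a single cyclic permutation: any cell reaches any other cell by
iterating `suc`. -/
theorem stmt_14 (n m : ℕ) (hn : 1 ≤ n) (hnodd : Odd n) (hm : 1 ≤ m) :
    (∀ p : ℤ × ℤ, insideRect n m p →
      insideRect n m (sucMap n m p) ∧
      (sucMap n m p = (p.1, p.2 + 1) ∨ sucMap n m p = (p.1, p.2 - 1) ∨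
       sucMap n m p = (p.1 + 1, p.2) ∨ sucMap n m p = (p.1 - 1, p.2))) ∧
    (∀ c c' : ℤ × ℤ, insideRect n m c → insideRect n m c' →
      ∃ k : ℕ, (sucMap n m)^[k] c = c') := by
  have hNpos : 0 < (n + 1) * (m + 2) := by positivity
  constructor
  · intro p hp
    obtain ⟨a, haN, hpa⟩ := posAux_surj n m hn hm p.1 p.2 hp.1 hp.2.1 hp.2.2.1 hp.2.2.2
    constructor
    · rw [show p = posAux n m a from by rw [hpa],
        sucMap_posAux n m hn hnodd hm a haN]
      exact posAux_mem n m hn hm _ (Nat.mod_lt _ hNpos)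
    · rw [sucMap]
      split_ifs
      · exact Or.inl rfl
      · exact Or.inr (Or.inl rfl)
      · exact Or.inr (Or.inr (Or.inl rfl))
      · exact Or.inr (Or.inr (Or.inr rfl))
  · intro c c' hc hc'
    obtain ⟨a, haN, ha⟩ := posAux_surj n m hn hm c.1 c.2 hc.1 hc.2.1 hc.2.2.1 hc.2.2.2
    obtain ⟨b, hbN, hb⟩ :=
      posAux_surj n m hn hm c'.1 c'.2 hc'.1 hc'.2.1 hc'.2.2.1 hc'.2.2.2
    refine ⟨b + (n + 1) * (m + 2) - a, ?_⟩
    rw [show c = posAux n m a from by rw [ha],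
      iterate_posAux n m hn hnodd hm _ a haN,
      show a + (b + (n + 1) * (m + 2) - a) = b + (n + 1) * (m + 2) by omega,
      Nat.add_mod_right, Nat.mod_eq_of_lt hbN, hb]
end
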